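/- Game-theoretic Lévy zero-one law: for any prequential event E ⊆ Π, for almost all π ∈ E one has UpProb(E | π^n) → 1 as n → ∞; that is, there exists N ⊆ Π with UpProb(N) = 0 such that this convergence holds for all π ∈ E \ N. -/

import Mathlib

open Filter Topology MeasureTheory
open scoped ENNReal NNReal unitInterval

noncomputable section

/-- Finite prequential sequences: finite sequences of pairs (p, y) with p ∈ [0,1], y ∈ {0,1}. -/
abbrev PreqFin := List (unitInterval × Bool)

/-- The prequential space Π = ([0,1] × {0,1})^∞. -/
abbrev PreqInf := ℕ → unitInterval × Bool

/-- The length-n prefix π^n of π ∈ Π. -/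
def prefixn (π : PreqInf) (n : ℕ) : PreqFin := List.ofFn fun i : Fin n => π i

/-- A non-negative farthingale (values in [0,∞], with the convention 0·∞ = 0):
V(x) = (1-p)·V(x,p,0) + p·V(x,p,1). -/
def IsFarthingale (V : PreqFin → ℝ≥0∞) : Prop :=
  ∀ (x : PreqFin) (p : unitInterval),
    V x = ENNReal.ofReal (1 - (p : ℝ)) * V (x ++ [(p, false)])
        + ENNReal.ofReal (p : ℝ) * V (x ++ [(p, true)])

/-- Upper game-theoretic probability of a prequential event E ⊆ Π. -/
def UpProb (E : Set PreqInf) : ℝ≥0∞ :=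
  sInf {a | ∃ V : PreqFin → ℝ≥0∞, IsFarthingale V ∧ V [] = a ∧
    ∀ π ∈ E, 1 ≤ Filter.limsup (fun n => V (prefixn π n)) Filter.atTop}

/-- Γ(x): the set of infinite extensions in Π of the finite prequential sequence x. -/
def exts (x : PreqFin) : Set PreqInf := {π | prefixn π x.length = x}

/-- Conditional upper game-theoretic probability UpProb(E | x). -/
def UpProbCond (E : Set PreqInf) (x : PreqFin) : ℝ≥0∞ :=
  sInf {a | ∃ V : PreqFin → ℝ≥0∞, IsFarthingale V ∧ V x = a ∧
    ∀ π ∈ E ∩ exts x, 1 ≤ Filter.limsup (fun n => V (prefixn π n)) Filter.atTop}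

/-! ### Auxiliary material -/

lemma prefixn_zero (π : PreqInf) : prefixn π 0 = [] := rfl

lemma prefixn_succ (π : PreqInf) (n : ℕ) :
    prefixn π (n + 1) = prefixn π n ++ [π n] := by
  show List.ofFn _ = _
  rw [List.ofFn_succ']
  simp [prefixn, List.concat_eq_append]

lemma length_prefixn (π : PreqInf) (n : ℕ) : (prefixn π n).length = n := by
  simp [prefixn]

lemma mem_exts_prefixn (π : PreqInf) (n : ℕ) : π ∈ exts (prefixn π n) := by
  show prefixn π (prefixn π n).length = prefixn π n
  rw [length_prefixn]

lemma unit_split (p : unitInterval) :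
    ENNReal.ofReal (1 - (p : ℝ)) + ENNReal.ofReal (p : ℝ) = 1 := by
  rw [← ENNReal.ofReal_add (by linarith [p.2.2] : (0:ℝ) ≤ 1 - (p:ℝ)) p.2.1]
  simp

/-- The constant farthingale. -/
lemma isFarthingale_const (a : ℝ≥0∞) : IsFarthingale (fun _ => a) := by
  intro x p
  show a = _ * a + _ * a
  rw [← add_mul, unit_split, one_mul]

lemma UpProbCond_le_one (E : Set PreqInf) (x : PreqFin) : UpProbCond E x ≤ 1 := by
  refine sInf_le ⟨fun _ => 1, isFarthingale_const 1, rfl, fun π _ => ?_⟩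
  simp

/-- State of the combined trading strategy: either idle with some capital, or following the
chosen witness farthingale started at a node. -/
inductive ZState where
  | idle : ℝ≥0∞ → ZState
  | active : PreqFin → ℝ≥0∞ → ZState

/-- Value of a state at a node. -/
def zval (W : PreqFin → PreqFin → ℝ≥0∞) : ZState → PreqFin → ℝ≥0∞
  | .idle C, _ => C
  | .active x C, y => C * W x y / W x x

open Classical in
/-- Transition of the state, decided at node `y` (affects children of `y`). -/
def znext (W : PreqFin → PreqFin → ℝ≥0∞) (cond : PreqFin → Prop) (u : ℝ≥0∞) :
    ZState → PreqFin → ZState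
  | .idle C, y => if cond y then .active y C else .idle C
  | .active x C, y => if u ≤ W x y then .idle (C * W x y / W x x) else .active x C

/-- Iterate the transitions along a finite sequence. -/
def zgo (W : PreqFin → PreqFin → ℝ≥0∞) (cond : PreqFin → Prop) (u : ℝ≥0∞) :
    ZState → PreqFin → PreqFin → ZState
  | st, _, [] => st
  | st, x, a :: rest => zgo W cond u (znext W cond u st x) (x ++ [a]) rest

/-- The state of the strategy at a node. -/
def zstate (W : PreqFin → PreqFin → ℝ≥0∞) (cond : PreqFin → Prop) (u c : ℝ≥0∞)
    (y : PreqFin) : ZState :=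
  zgo W cond u (.idle c) [] y

/-- The capital process of the combined strategy. -/
def zS (W : PreqFin → PreqFin → ℝ≥0∞) (cond : PreqFin → Prop) (u c : ℝ≥0∞)
    (y : PreqFin) : ℝ≥0∞ :=
  zval W (zstate W cond u c y) y

lemma zgo_append (W : PreqFin → PreqFin → ℝ≥0∞) (cond : PreqFin → Prop) (u : ℝ≥0∞)
    (l : PreqFin) : ∀ (st : ZState) (x : PreqFin) (a : unitInterval × Bool),
    zgo W cond u st x (l ++ [a]) = znext W cond u (zgo W cond u st x l) (x ++ l) := by
  induction l with
  | nil => intro st x a; simp [zgo]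
  | cons b l ih =>
      intro st x a
      show zgo W cond u (znext W cond u st x) (x ++ [b]) (l ++ [a]) = _
      rw [ih]
      simp [zgo]

lemma zstate_append (W : PreqFin → PreqFin → ℝ≥0∞) (cond : PreqFin → Prop) (u c : ℝ≥0∞)
    (y : PreqFin) (a : unitInterval × Bool) :
    zstate W cond u c (y ++ [a]) = znext W cond u (zstate W cond u c y) y := by
  have := zgo_append W cond u y (.idle c) [] a
  simpa [zstate] using this

/-- Invariant: active states only occur at nodes satisfying `cond`. -/
def ZGood (cond : PreqFin → Prop) : ZState → Prop
  | .idle _ => True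
  | .active x _ => cond x

lemma ZGood_znext (W : PreqFin → PreqFin → ℝ≥0∞) (cond : PreqFin → Prop) (u : ℝ≥0∞)
    (st : ZState) (y : PreqFin) (h : ZGood cond st) : ZGood cond (znext W cond u st y) := by
  classical
  cases st with
  | idle C =>
      simp only [znext]
      split_ifs with hc
      · exact hc
      · trivial
  | active x C =>
      simp only [znext]
      split_ifs with hc
      · trivial
      · exact h

lemma ZGood_zstate (W : PreqFin → PreqFin → ℝ≥0∞) (cond : PreqFin → Prop) (u c : ℝ≥0∞)
    (y : PreqFin) : ZGood cond (zstate W cond u c y) := by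
  suffices H : ∀ (l : PreqFin) (st : ZState) (x : PreqFin), ZGood cond st →
      ZGood cond (zgo W cond u st x l) from H y (.idle c) [] trivial
  intro l
  induction l with
  | nil => intro st x h; exact h
  | cons b l ih => intro st x h; exact ih _ _ (ZGood_znext W cond u st x h)

lemma zS_nil (W : PreqFin → PreqFin → ℝ≥0∞) (cond : PreqFin → Prop) (u c : ℝ≥0∞) :
    zS W cond u c [] = c := rfl

lemma zval_znext_self (W : PreqFin → PreqFin → ℝ≥0∞) (cond : PreqFin → Prop) (u : ℝ≥0∞)
    (hW : ∀ x, cond x → 0 < W x x ∧ W x x ≠ ∞)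
    (st : ZState) (y : PreqFin) : zval W (znext W cond u st y) y = zval W st y := by
  classical
  cases st with
  | idle C =>
      simp only [znext]
      split_ifs with hc
      · obtain ⟨h0, htop⟩ := hW y hc
        show C * W y y / W y y = C
        rw [mul_div_assoc, ENNReal.div_self h0.ne' htop, mul_one]
      · rfl
  | active x C =>
      simp only [znext]
      split_ifs with hc
      · rfl
      · rfl

lemma zval_fair (W : PreqFin → PreqFin → ℝ≥0∞) (cond : PreqFin → Prop)
    (hW : ∀ x, cond x → IsFarthingale (W x))
    (st : ZState) (hg : ZGood cond st) (y : PreqFin) (p : unitInterval) :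
    zval W st y = ENNReal.ofReal (1 - (p : ℝ)) * zval W st (y ++ [(p, false)])
      + ENNReal.ofReal (p : ℝ) * zval W st (y ++ [(p, true)]) := by
  cases st with
  | idle C =>
      show C = _ * C + _ * C
      rw [← add_mul, unit_split, one_mul]
  | active x C =>
      have hf := hW x hg
      simp only [zval]
      rw [hf y p]
      simp only [div_eq_mul_inv]
      ring

/-- Provided every `cond`-node has a genuine witness farthingale with finite positive value
there, the combined capital process is a farthingale. -/
lemma zS_farthingale (W : PreqFin → PreqFin → ℝ≥0∞) (cond : PreqFin → Prop) (u c : ℝ≥0∞)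
    (hW : ∀ x, cond x → IsFarthingale (W x) ∧ 0 < W x x ∧ W x x ≠ ∞) :
    IsFarthingale (zS W cond u c) := by
  intro y p
  have hgood : ZGood cond (zstate W cond u c y) := ZGood_zstate W cond u c y
  have hgood' : ZGood cond (znext W cond u (zstate W cond u c y) y) :=
    ZGood_znext W cond u _ y hgood
  have hA := zval_znext_self W cond u (fun x hx => ⟨(hW x hx).2.1, (hW x hx).2.2⟩)
    (zstate W cond u c y) y
  have hB := zval_fair W cond (fun x hx => (hW x hx).1)
    (znext W cond u (zstate W cond u c y) y) hgood' y p
  show zval W (zstate W cond u c y) y = _ * zS W cond u c (y ++ [(p, false)])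
      + _ * zS W cond u c (y ++ [(p, true)])
  rw [← hA, hB]
  unfold zS
  rw [zstate_append, zstate_append]

lemma exists_one_le_mul_pow {c ρ : ℝ≥0∞} (hc : 0 < c) (hρ : 1 < ρ) :
    ∃ k : ℕ, 1 ≤ c * ρ ^ k := by
  rcases eq_or_ne c ∞ with rfl | hctop
  · exact ⟨0, by simp⟩
  rcases eq_or_ne ρ ∞ with rfl | hrtop
  · exact ⟨1, by simp [pow_one, ENNReal.mul_top hc.ne']⟩
  lift c to ℝ≥0 using hctop
  lift ρ to ℝ≥0 using hrtop
  have hρ' : (1 : ℝ≥0) < ρ := by exact_mod_cast hρ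
  have hc' : (0 : ℝ≥0) < c := by exact_mod_cast hc
  obtain ⟨k, hk⟩ := pow_unbounded_of_one_lt (c⁻¹ : ℝ≥0) hρ'
  refine ⟨k, ?_⟩
  have h1 : (1 : ℝ≥0) ≤ c * ρ ^ k := by
    calc (1 : ℝ≥0) = c * c⁻¹ := by rw [mul_inv_cancel₀ hc'.ne']
    _ ≤ c * ρ ^ k := mul_le_mul_right hk.le c
  exact_mod_cast h1

/-- Success of the combined strategy: along any path of `G` on which `cond` holds infinitely
often, the capital process has `limsup ≥ 1`. -/
lemma zS_success (W : PreqFin → PreqFin → ℝ≥0∞) (cond : PreqFin → Prop) (G : Set PreqInf)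
    (t u c : ℝ≥0∞) (hρ : 1 < u / t) (hu1 : u < 1) (hc : 0 < c)
    (hW : ∀ x, cond x → 0 < W x x ∧ W x x ≤ t ∧
      ∀ π ∈ G ∩ exts x, 1 ≤ Filter.limsup (fun n => W x (prefixn π n)) Filter.atTop)
    (π : PreqInf) (hπG : π ∈ G) (hfreq : ∃ᶠ n in Filter.atTop, cond (prefixn π n)) :
    1 ≤ Filter.limsup (fun n => zS W cond u c (prefixn π n)) Filter.atTop := by
  classical
  set sig : ℕ → ZState := fun n => zstate W cond u c (prefixn π n) with hsig
  have hsig0 : sig 0 = .idle c := rfl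
  have hstep : ∀ n, sig (n + 1) = znext W cond u (sig n) (prefixn π n) := by
    intro n
    show zstate W cond u c (prefixn π (n + 1)) = _
    rw [prefixn_succ, zstate_append]
  -- growth of the capital along the path
  have main : ∀ k : ℕ, ∃ n, k ≤ n ∧ ∃ C, sig n = .idle C ∧ c * (u / t) ^ k ≤ C := by
    intro k
    induction k with
    | zero => exact ⟨0, le_rfl, c, hsig0, by simp⟩
    | succ k ih =>
        obtain ⟨n, hkn, C, hsign, hC⟩ := ih
        -- find the first `cond` node from time n on; the state stays idle until then
        have hex : ∃ m, n ≤ m ∧ cond (prefixn π m) := by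
          obtain ⟨m, hm1, hm2⟩ := Filter.frequently_atTop.mp hfreq n
          exact ⟨m, hm1, hm2⟩
        set m := Nat.find hex with hm
        obtain ⟨hnm, hcm⟩ := Nat.find_spec hex
        have hidle : ∀ d, n + d ≤ m → sig (n + d) = .idle C := by
          intro d
          induction d with
          | zero => intro _; simpa using hsign
          | succ d ihd =>
              intro hle
              have hd : n + d < m := by omega
              have h1 : sig (n + d) = .idle C := ihd (by omega)
              have hnc : ¬ cond (prefixn π (n + d)) := by
                intro hc'
                exact Nat.find_min hex hd ⟨by omega, hc'⟩
              have : sig (n + d + 1) = znext W cond u (sig (n + d)) (prefixn π (n + d)) :=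
                hstep (n + d)
              rw [show n + (d + 1) = n + d + 1 by omega, this, h1]
              simp only [znext]
              rw [if_neg hnc]
        have hsigm : sig m = .idle C := by
          have := hidle (m - n) (by omega)
          rwa [show n + (m - n) = m by omega] at this
        set x := prefixn π m with hx
        have hsigm1 : sig (m + 1) = .active x C := by
          rw [hstep, hsigm]
          simp only [znext]
          rw [if_pos hcm]
        obtain ⟨hx0, hxt, hxs⟩ := hW x hcm
        have hls : 1 ≤ Filter.limsup (fun j => W x (prefixn π j)) Filter.atTop :=
          hxs π ⟨hπG, mem_exts_prefixn π m⟩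
        have hfr : ∃ᶠ j in Filter.atTop, u < W x (prefixn π j) :=
          Filter.frequently_lt_of_lt_limsup (by isBoundedDefault) (lt_of_lt_of_le hu1 hls)
        have hex2 : ∃ j, m + 1 ≤ j ∧ u ≤ W x (prefixn π j) := by
          obtain ⟨j, hj1, hj2⟩ := Filter.frequently_atTop.mp hfr (m + 1)
          exact ⟨j, hj1, hj2.le⟩
        set j := Nat.find hex2 with hj
        obtain ⟨hmj, hju⟩ := Nat.find_spec hex2
        have hact : ∀ d, m + 1 + d ≤ j → sig (m + 1 + d) = .active x C := by
          intro d
          induction d with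
          | zero => intro _; simpa using hsigm1
          | succ d ihd =>
              intro hle
              have hd : m + 1 + d < j := by omega
              have h1 : sig (m + 1 + d) = .active x C := ihd (by omega)
              have hnu : ¬ u ≤ W x (prefixn π (m + 1 + d)) := by
                intro hc'
                exact Nat.find_min hex2 hd ⟨by omega, hc'⟩
              have : sig (m + 1 + d + 1)
                  = znext W cond u (sig (m + 1 + d)) (prefixn π (m + 1 + d)) :=
                hstep (m + 1 + d)
              rw [show m + 1 + (d + 1) = m + 1 + d + 1 by omega, this, h1]
              simp only [znext]
              rw [if_neg hnu]
        have hsigj : sig j = .active x C := by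
          have := hact (j - (m + 1)) (by omega)
          rwa [show m + 1 + (j - (m + 1)) = j by omega] at this
        have hsigj1 : sig (j + 1) = .idle (C * W x (prefixn π j) / W x x) := by
          rw [hstep, hsigj]
          simp only [znext]
          rw [if_pos hju]
        refine ⟨j + 1, by omega, _, hsigj1, ?_⟩
        calc c * (u / t) ^ (k + 1) = c * (u / t) ^ k * (u / t) := by ring
        _ ≤ C * (u / t) := mul_le_mul_left hC _
        _ ≤ C * (W x (prefixn π j) / W x x) :=
            mul_le_mul_right (ENNReal.div_le_div hju hxt) _
        _ = C * W x (prefixn π j) / W x x := (mul_div_assoc _ _ _).symm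
  -- conclude: the capital is ≥ 1 infinitely often
  obtain ⟨k0, hk0⟩ := exists_one_le_mul_pow hc hρ
  refine Filter.le_limsup_of_frequently_le ?_
  rw [Filter.frequently_atTop]
  intro K
  obtain ⟨n, hn, C, hsign, hC⟩ := main (max K k0)
  refine ⟨n, le_trans (le_max_left _ _) hn, ?_⟩
  have hval : zS W cond u c (prefixn π n) = C := by
    show zval W (sig n) (prefixn π n) = C
    rw [hsign]
    rfl
  rw [hval]
  calc (1 : ℝ≥0∞) ≤ c * (u / t) ^ k0 := hk0
  _ ≤ c * (u / t) ^ max K k0 := mul_le_mul_right (pow_le_pow_right' hρ.le (le_max_right _ _)) _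
  _ ≤ C := hC

/-- The key lemma: the set of paths of `E` along which the conditional upper probability of `E`
drops below `t < 1` infinitely often is null. -/
lemma UpProb_freq_lt_eq_zero (E : Set PreqInf) (t u : ℝ≥0∞)
    (ht0 : 0 < t) (htu : t < u) (hu1 : u < 1) :
    UpProb {π | π ∈ E ∧ ∃ᶠ n in Filter.atTop, UpProbCond E (prefixn π n) < t} = 0 := by
  classical
  have httop : t ≠ ∞ := (htu.trans hu1).trans_le le_top |>.ne
  set cond : PreqFin → Prop := fun x => UpProbCond E x < t with hcond
  -- choose the witness farthingales
  have hWex : ∀ x : PreqFin, ∃ Wx : PreqFin → ℝ≥0∞, cond x →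
      IsFarthingale Wx ∧ 0 < Wx x ∧ Wx x < t ∧
      ∀ π ∈ E ∩ exts x, 1 ≤ Filter.limsup (fun n => Wx (prefixn π n)) Filter.atTop := by
    intro x
    by_cases hx : cond x
    · obtain ⟨a, ⟨V, hVf, hVx, hVsucc⟩, hat⟩ := sInf_lt_iff.mp hx
      set η := (t - a) / 2 with hη
      have hta : 0 < t - a := tsub_pos_iff_lt.mpr hat
      have htafin : t - a ≠ ∞ := by
        exact ne_top_of_le_ne_top httop tsub_le_self
      have hη0 : 0 < η := ENNReal.div_pos hta.ne' (by norm_num)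
      have hηlt : η < t - a := ENNReal.half_lt_self hta.ne' htafin
      refine ⟨fun y => V y + η, fun _ => ⟨?_, ?_, ?_, ?_⟩⟩
      · intro y p
        show V y + η = ENNReal.ofReal (1 - (p : ℝ)) * (V (y ++ [(p, false)]) + η)
          + ENNReal.ofReal (p : ℝ) * (V (y ++ [(p, true)]) + η)
        rw [hVf y p]
        have hsplit : ENNReal.ofReal (1 - (p : ℝ)) * η + ENNReal.ofReal (p : ℝ) * η = η := by
          rw [← add_mul, unit_split, one_mul]
        calc ENNReal.ofReal (1 - (p : ℝ)) * V (y ++ [(p, false)])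
              + ENNReal.ofReal (p : ℝ) * V (y ++ [(p, true)]) + η
            = ENNReal.ofReal (1 - (p : ℝ)) * V (y ++ [(p, false)])
              + ENNReal.ofReal (p : ℝ) * V (y ++ [(p, true)])
              + (ENNReal.ofReal (1 - (p : ℝ)) * η + ENNReal.ofReal (p : ℝ) * η) := by
                rw [hsplit]
        _ = ENNReal.ofReal (1 - (p : ℝ)) * (V (y ++ [(p, false)]) + η)
              + ENNReal.ofReal (p : ℝ) * (V (y ++ [(p, true)]) + η) := by ring
      · exact lt_of_lt_of_le hη0 le_add_self
      · show V x + η < t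
        rw [hVx]
        calc a + η < a + (t - a) := ENNReal.add_lt_add_left (ne_top_of_lt hat) hηlt
        _ = t := add_tsub_cancel_of_le hat.le
      · intro π hπ
        refine le_trans (hVsucc π hπ) (Filter.limsup_le_limsup ?_)
        exact Filter.Eventually.of_forall fun n => le_self_add
    · exact ⟨fun _ => 0, fun h => absurd h hx⟩
  choose W hW using hWex
  have hρ : 1 < u / t := by
    rw [ENNReal.lt_div_iff_mul_lt (Or.inl ht0.ne') (Or.inl httop), one_mul]
    exact htu
  refine le_antisymm ?_ (zero_le)
  refine ENNReal.le_of_forall_pos_le_add fun ε hε _ => ?_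
  rw [zero_add]
  have hεpos : (0 : ℝ≥0∞) < (ε : ℝ≥0∞) := by exact_mod_cast hε
  refine sInf_le ⟨zS W cond u (ε : ℝ≥0∞), ?_, zS_nil W cond u _, ?_⟩
  · exact zS_farthingale W cond u _ fun x hx =>
      ⟨(hW x hx).1, (hW x hx).2.1, ((hW x hx).2.2.1.trans_le le_top).ne⟩
  · intro π hπ
    exact zS_success W cond E t u (ε : ℝ≥0∞) hρ hu1 hεpos
      (fun x hx => ⟨(hW x hx).2.1, (hW x hx).2.2.1.le, (hW x hx).2.2.2⟩) π hπ.1 hπ.2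

/-- Countable unions of null sets are null. -/
lemma UpProb_iUnion_zero (F : ℕ → Set PreqInf) (hF : ∀ k, UpProb (F k) = 0) :
    UpProb (⋃ k, F k) = 0 := by
  refine le_antisymm ?_ (zero_le)
  refine ENNReal.le_of_forall_pos_le_add fun ε hε _ => ?_
  rw [zero_add]
  have hεpos : (0 : ℝ≥0∞) < (ε : ℝ≥0∞) := by exact_mod_cast hε
  have hpick : ∀ k : ℕ, ∃ V : PreqFin → ℝ≥0∞, IsFarthingale V ∧
      V [] < (ε : ℝ≥0∞) * 2⁻¹ ^ (k + 1) ∧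
      ∀ π ∈ F k, 1 ≤ Filter.limsup (fun n => V (prefixn π n)) Filter.atTop := by
    intro k
    have hpos : (0 : ℝ≥0∞) < (ε : ℝ≥0∞) * 2⁻¹ ^ (k + 1) :=
      ENNReal.mul_pos hεpos.ne' (pow_ne_zero _ (by simp))
    have hlt : UpProb (F k) < (ε : ℝ≥0∞) * 2⁻¹ ^ (k + 1) := (hF k) ▸ hpos
    obtain ⟨a, ⟨V, hVf, hVa, hVsucc⟩, ha⟩ := sInf_lt_iff.mp hlt
    exact ⟨V, hVf, hVa ▸ ha, hVsucc⟩
  choose V hVf hVs hVsucc using hpick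
  set Vt : PreqFin → ℝ≥0∞ := fun y => ∑' k, V k y with hVt
  have hVtf : IsFarthingale Vt := by
    intro x p
    have : ∀ k : ℕ, V k x = ENNReal.ofReal (1 - (p : ℝ)) * V k (x ++ [(p, false)])
        + ENNReal.ofReal (p : ℝ) * V k (x ++ [(p, true)]) := fun k => hVf k x p
    calc Vt x = ∑' k, (ENNReal.ofReal (1 - (p : ℝ)) * V k (x ++ [(p, false)])
        + ENNReal.ofReal (p : ℝ) * V k (x ++ [(p, true)])) := tsum_congr this
    _ = (∑' k, ENNReal.ofReal (1 - (p : ℝ)) * V k (x ++ [(p, false)]))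
        + ∑' k, ENNReal.ofReal (p : ℝ) * V k (x ++ [(p, true)]) := ENNReal.tsum_add
    _ = ENNReal.ofReal (1 - (p : ℝ)) * Vt (x ++ [(p, false)])
        + ENNReal.ofReal (p : ℝ) * Vt (x ++ [(p, true)]) := by
          rw [ENNReal.tsum_mul_left, ENNReal.tsum_mul_left]
  have hbound : Vt [] ≤ (ε : ℝ≥0∞) := by
    calc Vt [] ≤ ∑' k : ℕ, (ε : ℝ≥0∞) * 2⁻¹ ^ (k + 1) :=
          ENNReal.tsum_le_tsum fun k => (hVs k).le
    _ = (ε : ℝ≥0∞) * ∑' k : ℕ, 2⁻¹ ^ (k + 1) := ENNReal.tsum_mul_left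
    _ = (ε : ℝ≥0∞) * (2⁻¹ * ∑' k : ℕ, (2⁻¹ : ℝ≥0∞) ^ k) := by
          congr 1
          simp_rw [pow_succ, mul_comm]
          exact ENNReal.tsum_mul_left
    _ = (ε : ℝ≥0∞) * (2⁻¹ * (1 - 2⁻¹)⁻¹) := by rw [ENNReal.tsum_geometric]
    _ = (ε : ℝ≥0∞) := by
          rw [ENNReal.one_sub_inv_two, ENNReal.mul_inv_cancel (by norm_num) (by norm_num),
            mul_one]
  calc UpProb (⋃ k, F k) ≤ Vt [] := by
        refine sInf_le ⟨Vt, hVtf, rfl, ?_⟩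
        intro π hπ
        obtain ⟨k, hk⟩ : ∃ k, π ∈ F k := Set.mem_iUnion.mp hπ
        refine le_trans (hVsucc k π hk) (Filter.limsup_le_limsup ?_)
        exact Filter.Eventually.of_forall fun n => ENNReal.le_tsum k
  _ ≤ (ε : ℝ≥0∞) := hbound

/-- Game-theoretic Lévy zero-one law: for any prequential event E, for almost all π ∈ E
(i.e., outside a set N with UpProb(N) = 0), UpProb(E | π^n) → 1 as n → ∞. -/
theorem levy_zero_one_law (E : Set PreqInf) :
    ∃ N : Set PreqInf, UpProb N = 0 ∧
      ∀ π ∈ E \ N,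
        Filter.Tendsto (fun n => UpProbCond E (prefixn π n)) Filter.atTop (nhds 1) := by
  classical
  set t : ℕ → ℝ≥0∞ := fun k => ENNReal.ofReal (1 - 1 / (k + 2)) with ht
  set u : ℕ → ℝ≥0∞ := fun k => ENNReal.ofReal (1 - 1 / (2 * (k + 2))) with hu
  have hk2 : ∀ k : ℕ, (0 : ℝ) < (k : ℝ) + 2 := fun k => by positivity
  have ht0 : ∀ k, 0 < t k := fun k => by
    rw [ht]
    refine ENNReal.ofReal_pos.mpr ?_
    have := hk2 k
    rw [sub_pos, div_lt_one this]
    linarith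
  have htu : ∀ k, t k < u k := fun k => by
    rw [ht, hu]
    refine (ENNReal.ofReal_lt_ofReal_iff ?_).mpr ?_
    · have := hk2 k
      rw [sub_pos, div_lt_one (by linarith)]
      linarith
    · have := hk2 k
      have h1 : 1 / (2 * ((k : ℝ) + 2)) < 1 / ((k : ℝ) + 2) := by
        apply div_lt_div_of_pos_left <;> linarith
      linarith
  have hu1 : ∀ k, u k < 1 := fun k => by
    rw [hu, show (1 : ℝ≥0∞) = ENNReal.ofReal 1 by simp]
    refine (ENNReal.ofReal_lt_ofReal_iff one_pos).mpr ?_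
    have := hk2 k
    have : (0 : ℝ) < 1 / (2 * ((k : ℝ) + 2)) := by positivity
    linarith
  set F : ℕ → Set PreqInf := fun k =>
    {π | π ∈ E ∧ ∃ᶠ n in Filter.atTop, UpProbCond E (prefixn π n) < t k} with hF
  refine ⟨⋃ k, F k, UpProb_iUnion_zero F fun k =>
    UpProb_freq_lt_eq_zero E (t k) (u k) (ht0 k) (htu k) (hu1 k), ?_⟩
  intro π hπ
  obtain ⟨hπE, hπN⟩ := hπ
  have hev : ∀ k : ℕ, ∀ᶠ n in Filter.atTop, t k ≤ UpProbCond E (prefixn π n) := by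
    intro k
    have : π ∉ F k := fun h => hπN (Set.mem_iUnion.mpr ⟨k, h⟩)
    rw [hF] at this
    simp only [Set.mem_setOf_eq, not_and] at this
    have hnotfreq := this hπE
    rw [Filter.not_frequently] at hnotfreq
    exact hnotfreq.mono fun n hn => not_lt.mp hn
  refine tendsto_order.mpr ⟨?_, ?_⟩
  · intro a ha
    -- choose k with a < t k
    have hafin : a ≠ ∞ := ha.trans_le le_top |>.ne
    have hatR : a.toReal < 1 := by
      rw [← ENNReal.toReal_one]
      exact ENNReal.toReal_strict_mono (by simp) ha
    obtain ⟨k, hk⟩ := exists_nat_gt ((1 - a.toReal)⁻¹)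
    have hkpos : (0 : ℝ) < 1 - a.toReal := by linarith
    have hlt : 1 / ((k : ℝ) + 2) < 1 - a.toReal := by
      rw [div_lt_iff₀ (hk2 k)]
      have h2 : (1 - a.toReal)⁻¹ < (k : ℝ) + 2 := by
        have : (k : ℝ) ≤ (k : ℝ) + 2 := by linarith
        linarith
      calc (1 : ℝ) = (1 - a.toReal) * (1 - a.toReal)⁻¹ := by
            rw [mul_inv_cancel₀ hkpos.ne']
      _ < (1 - a.toReal) * ((k : ℝ) + 2) := by
            exact mul_lt_mul_of_pos_left h2 hkpos
    have hak : a < t k := by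
      rw [ht]
      rw [ENNReal.lt_ofReal_iff_toReal_lt hafin]
      linarith
    exact (hev k).mono fun n hn => lt_of_lt_of_le hak hn
  · intro b hb
    exact Filter.Eventually.of_forall fun n =>
      lt_of_le_of_lt (UpProbCond_le_one E (prefixn π n)) hb
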